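/- Let q be a prime and r, n positive integers. The group GL_n(ℚ) contains an element of order q^r if and only if φ(q^r) ≤ n, where φ is Euler's totient function. -/

import Mathlib

open Polynomial Matrix
/-- For a prime `q` and positive integers `r, n`, `GL_n(ℚ)` contains an element of order
`q^r` if and only if `φ(q^r) ≤ n`. -/
theorem gl_rat_has_element_of_prime_power_order_iff (q : ℕ) (hq : q.Prime)
    (r n : ℕ) (hr : 0 < r) (hn : 0 < n) :
    (∃ g : GL (Fin n) ℚ, orderOf g = q ^ r) ↔ Nat.totient (q ^ r) ≤ n := by
  constructor
  · rintro ⟨g, hg⟩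
    set M : Matrix (Fin n) (Fin n) ℚ := (g : Matrix (Fin n) (Fin n) ℚ) with hMdef
    have hM : M ^ q ^ r = 1 := by
      have h1 : g ^ q ^ r = 1 := by rw [← hg]; exact pow_orderOf_eq_one g
      have := congrArg Units.val h1
      simpa using this
    have hdvd : minpoly ℚ M ∣ X ^ q ^ r - 1 := by
      apply minpoly.dvd
      simp [hM]
    have hΦ : cyclotomic (q ^ r) ℚ ∣ minpoly ℚ M := by
      by_contra h
      have hirr : Irreducible (cyclotomic (q ^ r) ℚ) :=
        cyclotomic.irreducible_rat (pow_pos hq.pos r)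
      have hcop : IsCoprime (cyclotomic (q ^ r) ℚ) (minpoly ℚ M) :=
        hirr.coprime_iff_not_dvd.2 h
      have : Fact q.Prime := ⟨hq⟩
      have hfact : cyclotomic (q ^ ((r-1)+1)) ℚ * (X ^ q ^ (r-1) - 1) = X ^ q ^ ((r-1)+1) - 1 :=
        cyclotomic_prime_pow_mul_X_pow_sub_one ℚ q (r-1)
      have hr1 : r - 1 + 1 = r := by omega
      rw [hr1] at hfact
      have hdvd2 : minpoly ℚ M ∣ X ^ q ^ (r - 1) - 1 := by
        apply hcop.symm.dvd_of_dvd_mul_right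
        show minpoly ℚ M ∣ (X ^ q ^ (r-1) - 1) * cyclotomic (q ^ r) ℚ
        rw [mul_comm, hfact]; exact hdvd
      have hM2 : M ^ q ^ (r - 1) = 1 := by
        obtain ⟨c, hc⟩ := hdvd2
        have := congrArg (aeval M) hc
        simp [minpoly.aeval] at this
        rwa [sub_eq_zero] at this
      have hg2 : g ^ q ^ (r - 1) = 1 := by
        apply Units.ext
        rw [Units.val_pow_eq_pow_val, Units.val_one, ← hMdef]
        exact hM2
      have := orderOf_dvd_of_pow_eq_one hg2
      rw [hg] at this
      have hle : r ≤ r - 1 := (Nat.pow_dvd_pow_iff_le_right hq.one_lt).1 this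
      omega
    have h1 : (cyclotomic (q ^ r) ℚ).natDegree ≤ n := by
      have : cyclotomic (q ^ r) ℚ ∣ M.charpoly := hΦ.trans (Matrix.minpoly_dvd_charpoly M)
      have hne : M.charpoly ≠ 0 := (Matrix.charpoly_monic M).ne_zero
      have := Polynomial.natDegree_le_of_dvd this hne
      simpa [Matrix.charpoly_natDegree_eq_dim] using this
    simpa [natDegree_cyclotomic] using h1
  · intro h
    have : Fact q.Prime := ⟨hq⟩
    have hpos : 0 < q ^ r := pow_pos hq.pos r
    set N : ℕ+ := ⟨q ^ r, hpos⟩ with hN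
    set K := CyclotomicField N ℚ with hK
    haveI : IsCyclotomicExtension {(N : ℕ)} ℚ K := by
      haveI : NeZero (N : ℕ) := ⟨N.ne_zero⟩
      haveI : NeZero ((N : ℕ) : ℚ) := ⟨by exact_mod_cast N.ne_zero⟩
      exact CyclotomicField.isCyclotomicExtension (N : ℕ) ℚ
    have hζ : IsPrimitiveRoot (IsCyclotomicExtension.zeta N ℚ K) N :=
      IsCyclotomicExtension.zeta_spec N ℚ K
    set ζ := IsCyclotomicExtension.zeta N ℚ K with hzeta
    haveI : FiniteDimensional ℚ K := IsCyclotomicExtension.finiteDimensional {(N : ℕ)} ℚ K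
    have hfin : Module.finrank ℚ K = (q ^ r).totient := by
      have := IsCyclotomicExtension.finrank (n := N) K
        (cyclotomic.irreducible_rat (by exact_mod_cast hpos))
      simpa [hN] using this
    set m := Module.finrank ℚ K with hm
    have hmn : m ≤ n := by rw [hfin]; exact h
    let b := Module.finBasis ℚ K
    set C := Algebra.leftMulMatrix b ζ with hC
    have hCiff : ∀ k : ℕ, C ^ k = 1 ↔ ζ ^ k = 1 := by
      intro k
      rw [hC, ← map_pow]
      constructor
      · intro hk
        apply Algebra.leftMulMatrix_injective b
        rw [hk, _root_.map_one]
      · intro hk; rw [hk, _root_.map_one]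
    set A : Matrix (Fin m ⊕ Fin (n - m)) (Fin m ⊕ Fin (n - m)) ℚ := fromBlocks C 0 0 1 with hA
    have hApow : ∀ k : ℕ, A ^ k = fromBlocks (C ^ k) 0 0 1 := by
      intro k
      induction k with
      | zero => simp [fromBlocks_one]
      | succ k ih => rw [pow_succ, ih, pow_succ, hA, fromBlocks_multiply]; simp
    have hAiff : ∀ k : ℕ, A ^ k = 1 ↔ C ^ k = 1 := by
      intro k
      rw [hApow]
      constructor
      · intro hk
        ext i j
        have h2 := congrFun (congrFun hk (Sum.inl i)) (Sum.inl j)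
        simp only [Matrix.fromBlocks_apply₁₁] at h2
        rw [h2]
        simp [Matrix.one_apply]
      · intro hk; rw [hk, fromBlocks_one]
    set e : Fin m ⊕ Fin (n - m) ≃ Fin n := finSumFinEquiv.trans (finCongr (by omega)) with he
    set Φe := Matrix.reindexAlgEquiv ℚ ℚ e with hPhie
    set A' := Φe A with hA'
    have hA'iff : ∀ k : ℕ, A' ^ k = 1 ↔ A ^ k = 1 := by
      intro k
      rw [hA', ← map_pow]
      constructor
      · intro hk
        apply Φe.injective
        rw [hk, _root_.map_one]
      · intro hk; rw [hk, _root_.map_one]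
    have hkey : ∀ k : ℕ, A' ^ k = 1 ↔ (q ^ r : ℕ) ∣ k := by
      intro k
      rw [hA'iff, hAiff, hCiff]
      exact_mod_cast hζ.pow_eq_one_iff_dvd k
    have hA'r : A' ^ q ^ r = 1 := (hkey _).2 dvd_rfl
    have hval : A' * A' ^ (q ^ r - 1) = 1 := by
      rw [← pow_succ', Nat.sub_add_cancel hpos]; exact hA'r
    have hinv : A' ^ (q ^ r - 1) * A' = 1 := by
      rw [← pow_succ, Nat.sub_add_cancel hpos]; exact hA'r
    refine ⟨⟨A', A' ^ (q ^ r - 1), hval, hinv⟩, ?_⟩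
    have hgk : ∀ k : ℕ, (⟨A', A' ^ (q ^ r - 1), hval, hinv⟩ : GL (Fin n) ℚ) ^ k = 1 ↔ A' ^ k = 1 :=
      fun k => by rw [Units.ext_iff, Units.val_pow_eq_pow_val, Units.val_one]
    have h1 : r - 1 + 1 = r := by omega
    have hnot : ¬ (⟨A', A' ^ (q ^ r - 1), hval, hinv⟩ : GL (Fin n) ℚ) ^ q ^ (r - 1) = 1 := by
      rw [hgk, hkey]
      intro hdvd
      have := (Nat.pow_dvd_pow_iff_le_right hq.one_lt).1 hdvd
      omega
    have hfin2 : (⟨A', A' ^ (q ^ r - 1), hval, hinv⟩ : GL (Fin n) ℚ) ^ q ^ (r - 1 + 1) = 1 := by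
      rw [hgk, h1]
      exact hA'r
    have h2 := orderOf_eq_prime_pow hnot hfin2
    rwa [h1] at h2
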